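/- For the piecewise-linear function ζ(d) = max{−d + c₁, 0, d − c₂} with 0 < c₁ < c₂, setting η = (c₁+c₂)/2 and F(η) = √((η−μ)²+σ²), if σ > 0, (1/4)(2μ−3c₁+c₂)(3c₂−c₁−2μ) ≤ σ² and η − F(η) ≥ 0, then the supremum of ∫ζ dQ over probability measures Q on ℝ₊ with mean μ and second moment μ²+σ² is attained uniquely by the two-point measure placing mass σ²/(σ²+(η−F(η)−μ)²) at η−F(η) and the remaining mass at η+F(η). -/

import Mathlib

set_option maxHeartbeats 1000000


open MeasureTheory Set

/-- A two-point probability measure with mass p at d₁ and mass 1-p at d₂. -/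
noncomputable def twoPoint (p d₁ d₂ : ℝ) : MeasureTheory.Measure ℝ :=
  ENNReal.ofReal p • MeasureTheory.Measure.dirac d₁ +
    ENNReal.ofReal (1 - p) • MeasureTheory.Measure.dirac d₂

/-- Membership in the moment family: probability measures on ℝ₊ with mean μ
and second moment μ²+σ². -/
def inMomentFamily (μ σ : ℝ) (Q : MeasureTheory.Measure ℝ) : Prop :=
  MeasureTheory.IsProbabilityMeasure Q ∧ Q (Set.Ici (0:ℝ))ᶜ = 0 ∧
    MeasureTheory.Integrable id Q ∧ MeasureTheory.Integrable (fun t => t ^ 2) Q ∧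
    (∫ t, t ∂Q) = μ ∧ (∫ t, t ^ 2 ∂Q) = μ ^ 2 + σ ^ 2

lemma integrable_dirac'' (f : ℝ → ℝ) (a : ℝ) : Integrable f (Measure.dirac a) :=
  (integrable_const (f a)).congr (by rw [MeasureTheory.ae_dirac_eq]; exact Filter.eventually_pure.2 rfl)

lemma integrable_twoPoint (f : ℝ → ℝ) (p d₁ d₂ : ℝ) : Integrable f (twoPoint p d₁ d₂) := by
  unfold twoPoint
  exact ((integrable_dirac'' f d₁).smul_measure ENNReal.ofReal_ne_top).add_measure
    ((integrable_dirac'' f d₂).smul_measure ENNReal.ofReal_ne_top)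

lemma integral_twoPoint (f : ℝ → ℝ) (p d₁ d₂ : ℝ) (hp0 : 0 ≤ p) (hp1 : p ≤ 1) :
    ∫ t, f t ∂(twoPoint p d₁ d₂) = p * f d₁ + (1 - p) * f d₂ := by
  unfold twoPoint
  rw [integral_add_measure ((integrable_dirac'' f d₁).smul_measure ENNReal.ofReal_ne_top)
    ((integrable_dirac'' f d₂).smul_measure ENNReal.ofReal_ne_top),
    integral_smul_measure, integral_smul_measure, integral_dirac, integral_dirac,
    ENNReal.toReal_ofReal hp0, ENNReal.toReal_ofReal (by linarith)]
  simp [smul_eq_mul]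

lemma isProb_twoPoint (p d₁ d₂ : ℝ) (hp0 : 0 ≤ p) (hp1 : p ≤ 1) :
    IsProbabilityMeasure (twoPoint p d₁ d₂) := by
  constructor
  unfold twoPoint
  simp [Measure.add_apply, Measure.smul_apply, smul_eq_mul]
  rw [← ENNReal.ofReal_add hp0 (by linarith)]
  norm_num

/-- For ζ(d) = max{−d+c₁, 0, d−c₂}, with 0 < c₁ < c₂, η = (c₁+c₂)/2 and
F(η) = √((η−μ)²+σ²), under the stated conditions the maximum of ∫ζ dQ over the
moment family is attained uniquely by the two-point measure with mass
σ²/(σ²+(η−F(η)−μ)²) at η−F(η) and the remaining mass at η+F(η). -/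
theorem natarajan_unique_maximizer (μ σ c₁ c₂ : ℝ) (hσ : 0 < σ)
    (hc₁ : 0 < c₁) (hc : c₁ < c₂)
    (hcond : (1/4) * (2*μ - 3*c₁ + c₂) * (3*c₂ - c₁ - 2*μ) ≤ σ ^ 2)
    (hpos : 0 ≤ (c₁ + c₂)/2 - Real.sqrt (((c₁ + c₂)/2 - μ) ^ 2 + σ ^ 2)) :
    let η := (c₁ + c₂)/2
    let Fη := Real.sqrt ((η - μ) ^ 2 + σ ^ 2)
    let Qs := twoPoint (σ ^ 2 / (σ ^ 2 + (η - Fη - μ) ^ 2)) (η - Fη) (η + Fη)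
    let ζ := fun d : ℝ => max (max (-d + c₁) 0) (d - c₂)
    inMomentFamily μ σ Qs ∧
    (∀ Q : MeasureTheory.Measure ℝ, inMomentFamily μ σ Q →
      (∫ t, ζ t ∂Q) ≤ ∫ t, ζ t ∂Qs) ∧
    (∀ Q : MeasureTheory.Measure ℝ, inMomentFamily μ σ Q →
      (∫ t, ζ t ∂Q) = (∫ t, ζ t ∂Qs) → Q = Qs) := by
  classical
  intro η Fη Qs ζ
  have hη : η = (c₁ + c₂)/2 := rfl
  have hζdef : ζ = fun d : ℝ => max (max (-d + c₁) 0) (d - c₂) := rfl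
  set w : ℝ := (c₂ - c₁)/2 with hwdef
  set p : ℝ := σ ^ 2 / (σ ^ 2 + (η - Fη - μ) ^ 2) with hpdef
  set d₁ : ℝ := η - Fη with hd₁
  set d₂ : ℝ := η + Fη with hd₂
  have hQsdef : Qs = twoPoint p d₁ d₂ := rfl
  have hw : 0 < w := by rw [hwdef]; linarith
  have hF0 : 0 < Fη := Real.sqrt_pos.2 (by positivity)
  have hF2 : Fη ^ 2 = (η - μ) ^ 2 + σ ^ 2 := Real.sq_sqrt (by positivity)
  have hFw : 2 * w ≤ Fη := by
    have h4 : (2*w)^2 ≤ Fη ^ 2 := by rw [hF2, hwdef, hη]; nlinarith [hcond]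
    nlinarith [hF0, hw]
  have hlt1 : η - μ < Fη := by nlinarith [hF2, hσ, hF0]
  have hlt2 : μ - η < Fη := by nlinarith [hF2, hσ, hF0]
  have hdenpos : 0 < σ ^ 2 + (η - Fη - μ) ^ 2 := by positivity
  have hden : σ ^ 2 + (η - Fη - μ) ^ 2 = 2 * Fη * (Fη - η + μ) := by linear_combination -hF2
  have hpD : p * (σ ^ 2 + (η - Fη - μ) ^ 2) = σ ^ 2 := by
    rw [hpdef]; field_simp; rfl
  have hp0 : 0 ≤ p := by positivity
  have hp1 : p ≤ 1 := by
    rw [hpdef]; rw [div_le_one hdenpos]; nlinarith [sq_nonneg (η - Fη - μ)]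
  have hd₁0 : 0 ≤ d₁ := hpos
  have hd₂0 : 0 ≤ d₂ := by rw [hd₂]; nlinarith
  -- moment identities of Qs
  have hu : 0 < Fη - η + μ := by linarith
  have h1 : p * (2 * Fη * (Fη - η + μ)) = σ ^ 2 := by rw [← hden]; exact hpD
  have hmean : p * d₁ + (1 - p) * d₂ = μ := by
    have key : (Fη - η + μ) * (p * d₁ + (1 - p) * d₂ - μ) = 0 := by
      rw [hd₁, hd₂]; linear_combination hF2 - h1
    rcases mul_eq_zero.1 key with h | h
    · linarith
    · linarith
  have hmom2 : p * d₁ ^ 2 + (1 - p) * d₂ ^ 2 = μ ^ 2 + σ ^ 2 := by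
    have key : (Fη - η + μ) * (p * d₁ ^ 2 + (1 - p) * d₂ ^ 2 - (μ ^ 2 + σ ^ 2)) = 0 := by
      rw [hd₁, hd₂]; linear_combination (Fη + η + μ) * hF2 - 2 * η * h1
    rcases mul_eq_zero.1 key with h | h
    · linarith
    · linarith
  have hmember : inMomentFamily μ σ Qs := by
    refine ⟨isProb_twoPoint p d₁ d₂ hp0 hp1, ?_, integrable_twoPoint _ _ _ _,
      integrable_twoPoint _ _ _ _, ?_, ?_⟩
    · rw [hQsdef]
      unfold twoPoint
      have h1 : Measure.dirac d₁ (Set.Ici (0:ℝ))ᶜ = 0 := by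
        rw [Measure.dirac_apply' _ measurableSet_Ici.compl]
        simp only [Set.indicator_apply, Set.mem_compl_iff, Set.mem_Ici, not_le]
        rw [if_neg (by linarith)]
      have h2 : Measure.dirac d₂ (Set.Ici (0:ℝ))ᶜ = 0 := by
        rw [Measure.dirac_apply' _ measurableSet_Ici.compl]
        simp only [Set.indicator_apply, Set.mem_compl_iff, Set.mem_Ici, not_le]
        rw [if_neg (by linarith)]
      simp only [Measure.coe_add, Pi.add_apply, Measure.smul_apply, h1, h2, smul_eq_mul,
        mul_zero, add_zero]
    · rw [hQsdef, show (fun t : ℝ => t) = id from rfl]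
      rw [integral_twoPoint id p d₁ d₂ hp0 hp1]
      simpa using hmean
    · rw [hQsdef, integral_twoPoint (fun t => t ^ 2) p d₁ d₂ hp0 hp1]
      simpa using hmom2
  -- the quadratic majorant
  set q : ℝ → ℝ := fun t => ((t - η) ^ 2 + Fη ^ 2 - 2 * Fη * w) / (2 * Fη) with hqdef
  have h2F : (0:ℝ) < 2 * Fη := by linarith
  have h2Fne : (2 * Fη) ≠ 0 := ne_of_gt h2F
  have hζq : ∀ t, ζ t ≤ q t := by
    intro t
    rw [hζdef]
    refine max_le (max_le ?_ ?_) ?_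
    · rw [hqdef]
      simp only
      rw [le_div_iff₀ h2F]
      nlinarith [sq_nonneg (t - η + Fη)]
    · rw [hqdef]
      simp only
      apply div_nonneg ?_ (by linarith)
      nlinarith [sq_nonneg (t - η), mul_nonneg hF0.le (by linarith : (0:ℝ) ≤ Fη - 2 * w)]
    · rw [hqdef]
      simp only
      rw [le_div_iff₀ h2F]
      nlinarith [sq_nonneg (t - η - Fη)]
  have hζ0 : ∀ t, 0 ≤ ζ t := fun t => le_max_of_le_left (le_max_right _ _)
  have hζcont : Continuous ζ := by rw [hζdef]; fun_prop
  have hζd₁ : ζ d₁ = Fη - w := by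
    rw [hζdef]
    simp only
    have e1 : max (-d₁ + c₁) 0 = -d₁ + c₁ :=
      max_eq_left (by rw [hd₁, hη, hwdef] at *; linarith)
    rw [e1, max_eq_left (by rw [hd₁, hη, hwdef] at *; linarith)]
    rw [hd₁, hη, hwdef]; ring
  have hζd₂ : ζ d₂ = Fη - w := by
    rw [hζdef]
    simp only
    rw [max_eq_right (max_le (by rw [hd₂, hη, hwdef] at *; linarith)
      (by rw [hd₂, hη, hwdef] at *; linarith))]
    rw [hd₂, hη, hwdef]; ring
  have hQsval : ∫ t, ζ t ∂Qs = Fη - w := by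
    rw [hQsdef, integral_twoPoint ζ p d₁ d₂ hp0 hp1, hζd₁, hζd₂]; ring
  have hmain : ∀ Q : Measure ℝ, inMomentFamily μ σ Q →
      Integrable ζ Q ∧ Integrable q Q ∧ (∫ t, q t ∂Q) = Fη - w := by
    intro Q hQ
    obtain ⟨hQprob, hQsup, hQi1, hQi2, hQm1, hQm2⟩ := hQ
    have hiB : Integrable (fun t : ℝ => -(2 * η) * t) Q := hQi1.const_mul _
    have hiA : Integrable (fun t : ℝ => t ^ 2 + -(2 * η) * t) Q := hQi2.add hiB
    have hqrw : q = fun t : ℝ =>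
        ((t ^ 2 + -(2 * η) * t) + (η ^ 2 + Fη ^ 2 - 2 * Fη * w)) / (2 * Fη) := by
      rw [hqdef]; funext t; ring_nf
    have hqint : Integrable q Q := by
      rw [hqrw]
      exact (hiA.add (integrable_const _)).div_const _
    have hζint : Integrable ζ Q := by
      apply hqint.mono hζcont.aestronglyMeasurable
      filter_upwards with t
      rw [Real.norm_eq_abs, Real.norm_eq_abs, abs_of_nonneg (hζ0 t),
        abs_of_nonneg (le_trans (hζ0 t) (hζq t))]
      exact hζq t
    have hqval : ∫ t, q t ∂Q = Fη - w := by
      have hdiv : ∫ t, q t ∂Q =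
          (∫ t, ((t ^ 2 + -(2 * η) * t) + (η ^ 2 + Fη ^ 2 - 2 * Fη * w)) ∂Q) / (2 * Fη) := by
        rw [hqrw]; exact integral_div _ _
      have n1 : ∫ t, ((t ^ 2 + -(2 * η) * t) + (η ^ 2 + Fη ^ 2 - 2 * Fη * w)) ∂Q
          = (∫ t, (t ^ 2 + -(2 * η) * t) ∂Q) + ∫ _t, (η ^ 2 + Fη ^ 2 - 2 * Fη * w : ℝ) ∂Q :=
        integral_add hiA (integrable_const _)
      have n2 : ∫ t, (t ^ 2 + -(2 * η) * t) ∂Q = (∫ t, t ^ 2 ∂Q) + ∫ t, -(2 * η) * t ∂Q :=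
        integral_add hQi2 hiB
      have n3 : ∫ t, -(2 * η) * t ∂Q = -(2 * η) * μ := by rw [integral_const_mul, hQm1]
      have n4 : ∫ _t, (η ^ 2 + Fη ^ 2 - 2 * Fη * w : ℝ) ∂Q = η ^ 2 + Fη ^ 2 - 2 * Fη * w := by
        rw [integral_const, probReal_univ]; simp
      rw [hdiv, n1, n2, n3, n4, hQm2, div_eq_iff h2Fne]
      linear_combination -hF2
    exact ⟨hζint, hqint, hqval⟩
  refine ⟨hmember, ?_, ?_⟩
  · intro Q hQ
    obtain ⟨hζint, hqint, hqval⟩ := hmain Q hQ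
    rw [hQsval]
    calc ∫ t, ζ t ∂Q ≤ ∫ t, q t ∂Q := integral_mono hζint hqint hζq
    _ = Fη - w := hqval
  · intro Q hQ heq
    obtain ⟨hζint, hqint, hqval⟩ := hmain Q hQ
    obtain ⟨hQprob, hQsup, hQi1, hQi2, hQm1, hQm2⟩ := hQ
    have hzero : ∫ t, (q t - ζ t) ∂Q = 0 := by
      rw [integral_sub hqint hζint, hqval, heq, hQsval]; ring
    have hae : (fun t => q t - ζ t) =ᵐ[Q] 0 := by
      rw [← integral_eq_zero_iff_of_nonneg (fun t => sub_nonneg.2 (hζq t)) (hqint.sub hζint)]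
      exact hzero
    have hnull : Q {t | ¬ (q t - ζ t = 0)} = 0 := by
      rw [Filter.EventuallyEq, ae_iff] at hae
      simpa using hae
    set T : Set ℝ := {d₁, η, d₂} with hT
    have hTsub : Tᶜ ⊆ {t | ¬ (q t - ζ t = 0)} := by
      intro t ht
      simp only [Set.mem_compl_iff, hT, Set.mem_insert_iff, Set.mem_singleton_iff] at ht
      push_neg at ht
      obtain ⟨h₁, h₂, h₃⟩ := ht
      intro h0
      have hqt : q t = ζ t := sub_eq_zero.1 h0
      rw [hζdef] at hqt
      simp only at hqt
      rcases max_cases (max (-t + c₁) 0) (t - c₂) with ⟨hm, _⟩ | ⟨hm, _⟩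
      · rw [hm] at hqt
        rcases max_cases (-t + c₁) 0 with ⟨hm2, _⟩ | ⟨hm2, _⟩
        · rw [hm2] at hqt
          rw [hqdef] at hqt
          simp only at hqt
          have hmul : (t - η) ^ 2 + Fη ^ 2 - 2 * Fη * w = (-t + c₁) * (2 * Fη) :=
            (div_eq_iff h2Fne).1 hqt
          have hsq : (t - d₁) ^ 2 = 0 := by
            rw [hd₁]; linear_combination hmul + 2 * Fη * hwdef - 2 * Fη * hη
          exact h₁ (sub_eq_zero.1 ((pow_eq_zero_iff (two_ne_zero)).1 hsq))
        · rw [hm2] at hqt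
          rw [hqdef] at hqt
          simp only at hqt
          have hmul : (t - η) ^ 2 + Fη ^ 2 - 2 * Fη * w = 0 := by
            have h5 := (div_eq_iff h2Fne).1 hqt
            linear_combination h5
          have hsqe : (t - η) ^ 2 = -(Fη * (Fη - 2 * w)) := by linear_combination hmul
          have hsq : (t - η) ^ 2 ≤ 0 :=
            hsqe ▸ neg_nonpos.2 (mul_nonneg hF0.le (sub_nonneg.2 hFw))
          have hsq' : (t - η) ^ 2 = 0 := le_antisymm hsq (sq_nonneg _)
          exact h₂ (sub_eq_zero.1 ((pow_eq_zero_iff (two_ne_zero)).1 hsq'))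
      · rw [hm] at hqt
        rw [hqdef] at hqt
        simp only at hqt
        have hmul : (t - η) ^ 2 + Fη ^ 2 - 2 * Fη * w = (t - c₂) * (2 * Fη) :=
          (div_eq_iff h2Fne).1 hqt
        have hsq : (t - d₂) ^ 2 = 0 := by
          rw [hd₂]; linear_combination hmul + 2 * Fη * hwdef + 2 * Fη * hη
        exact h₃ (sub_eq_zero.1 ((pow_eq_zero_iff (two_ne_zero)).1 hsq))
    have hQTc : Q Tᶜ = 0 := measure_mono_null hTsub hnull
    have hTm : MeasurableSet T := by
      rw [hT]
      exact ((measurableSet_singleton d₂).insert η).insert d₁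
    have hne₁ : d₁ ≠ η := by rw [hd₁]; intro h; linarith
    have hne₂ : η ≠ d₂ := by rw [hd₂]; intro h; linarith
    have hne₃ : d₁ ≠ d₂ := by rw [hd₁, hd₂]; intro h; linarith
    have hsumInt : ∀ f : ℝ → ℝ, Integrable f Q →
        ∫ t, f t ∂Q = (Q {d₁}).toReal * f d₁ + (Q {η}).toReal * f η + (Q {d₂}).toReal * f d₂ := by
      intro f hf
      have h1 : ∫ t, f t ∂Q = ∫ t in T, f t ∂Q := by
        rw [← integral_add_compl hTm hf,
          show ∫ t in Tᶜ, f t ∂Q = 0 from by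
            rw [Measure.restrict_eq_zero.2 hQTc, integral_zero_measure]]
        ring
      rw [h1]
      have hTF : T = (({d₁, η, d₂} : Finset ℝ) : Set ℝ) := by simp [hT]
      rw [hTF, integral_finset _ hf.integrableOn]
      rw [show ({d₁, η, d₂} : Finset ℝ) = insert d₁ (insert η {d₂}) from rfl,
        Finset.sum_insert (by simp [hne₁, hne₃]), Finset.sum_insert (by simp [hne₂]),
        Finset.sum_singleton]
      simp [smul_eq_mul, Measure.real]
      ring
    have E1 : (Q {d₁}).toReal + (Q {η}).toReal + (Q {d₂}).toReal = 1 := by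
      have h := hsumInt (fun _ => 1) (integrable_const 1)
      simp only [integral_const, probReal_univ, ENNReal.toReal_one, one_smul, smul_eq_mul,
        mul_one] at h
      linarith
    have E2 : (Q {d₁}).toReal * d₁ + (Q {η}).toReal * η + (Q {d₂}).toReal * d₂ = μ := by
      have h := hsumInt (fun t => t) hQi1
      rw [hQm1] at h
      exact h.symm
    have E3 : (Q {d₁}).toReal * d₁ ^ 2 + (Q {η}).toReal * η ^ 2 + (Q {d₂}).toReal * d₂ ^ 2
        = μ ^ 2 + σ ^ 2 := by
      have h := hsumInt (fun t => t ^ 2) hQi2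
      rw [hQm2] at h
      exact h.symm
    rw [hd₁, hd₂] at E2 E3
    have hbF : Fη ^ 2 * (Q {η}).toReal = 0 := by
      linear_combination Fη ^ 2 * E1 - E3 + 2 * η * E2 - η ^ 2 * E1 + hF2
    have hb : (Q {η}).toReal = 0 :=
      (mul_eq_zero.1 hbF).resolve_left (pow_ne_zero 2 (ne_of_gt hF0))
    have h2a : 2 * Fη * (Q {d₁}).toReal = Fη + η - μ := by
      linear_combination (η + Fη) * E1 - E2 - Fη * hb
    have ha : (Q {d₁}).toReal = p := by
      rw [hpdef, eq_div_iff (ne_of_gt hdenpos)]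
      linear_combination (Q {d₁}).toReal * hden + (Fη - η + μ) * h2a + hF2
    have hcc : (Q {d₂}).toReal = 1 - p := by linear_combination E1 - hb - ha
    have hQd₁ : Q {d₁} = ENNReal.ofReal p := by
      rw [← ha]; exact (ENNReal.ofReal_toReal (measure_ne_top Q _)).symm
    have hQη : Q {η} = 0 := by
      rwa [ENNReal.toReal_eq_zero_iff, or_iff_left (measure_ne_top Q _)] at hb
    have hQd₂ : Q {d₂} = ENNReal.ofReal (1 - p) := by
      rw [← hcc]; exact (ENNReal.ofReal_toReal (measure_ne_top Q _)).symm
    ext s hs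
    have hdecomp : Q s = Q (s ∩ T) := by
      rw [← measure_inter_add_diff s hTm,
        measure_mono_null (fun t (ht : t ∈ s \ T) => ht.2) hQTc, add_zero]
    have hx : ∀ x : ℝ, Q (s ∩ {x}) = if x ∈ s then Q {x} else 0 := by
      intro x
      by_cases hxs : x ∈ s
      · rw [if_pos hxs, Set.inter_eq_right.2 (by simpa using hxs)]
      · rw [if_neg hxs, show s ∩ {x} = ∅ from by
          ext y; simp only [Set.mem_inter_iff, Set.mem_singleton_iff, Set.mem_empty_iff_false,
            iff_false, not_and]
          rintro hy rfl; exact hxs hy]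
        exact measure_empty
    have hsplit : Q (s ∩ T) = Q (s ∩ {d₁}) + (Q (s ∩ {η}) + Q (s ∩ {d₂})) := by
      rw [show s ∩ T = (s ∩ {d₁}) ∪ ((s ∩ {η}) ∪ (s ∩ {d₂})) from by
        rw [hT]; ext y
        simp only [Set.mem_inter_iff, Set.mem_insert_iff, Set.mem_singleton_iff,
          Set.mem_union]
        tauto]
      have hd2m : MeasurableSet (s ∩ {d₂} : Set ℝ) := hs.inter (measurableSet_singleton d₂)
      have hηm : MeasurableSet (s ∩ {η} : Set ℝ) := hs.inter (measurableSet_singleton η)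
      have hdisj2 : Disjoint (s ∩ {η} : Set ℝ) (s ∩ {d₂}) := by
        rw [Set.disjoint_left]
        rintro y ⟨-, hy1⟩ ⟨-, hy2⟩
        simp only [Set.mem_singleton_iff] at hy1 hy2
        exact hne₂ (hy1.symm.trans hy2)
      have hdisj1 : Disjoint (s ∩ {d₁} : Set ℝ) ((s ∩ {η}) ∪ (s ∩ {d₂})) := by
        rw [Set.disjoint_left]
        rintro y ⟨-, hy1⟩ (⟨-, hy2⟩ | ⟨-, hy2⟩)
        · simp only [Set.mem_singleton_iff] at hy1 hy2
          exact hne₁ (hy1.symm.trans hy2)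
        · simp only [Set.mem_singleton_iff] at hy1 hy2
          exact hne₃ (hy1.symm.trans hy2)
      rw [measure_union hdisj1 (hηm.union hd2m), measure_union hdisj2 hd2m]
    rw [hdecomp, hsplit, hx d₁, hx η, hx d₂, hQd₁, hQη, hQd₂, hQsdef]
    unfold twoPoint
    simp only [Measure.coe_add, Pi.add_apply, Measure.smul_apply, smul_eq_mul,
      Measure.dirac_apply' _ hs, Set.indicator_apply, Pi.one_apply]
    split_ifs <;> simp
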